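/- arXiv:2605.16875 — 4 statements merged into one kernel-verified Lean document; each statement's English description precedes it below -/
import Mathlib

section
/- Uniform stability of the empirical minimizer under strong convexity: let f(·,ξ) be μ-strongly convex and M-Lipschitz on a convex set Q ⊆ ℝⁿ (in a norm ‖·‖), let x̄ minimize f̄(x) = (1/N)Σ_{k=1}^N f(x,ξᵏ) over Q and x̄⁽ⁱ⁾ minimize the leave-one-out average f̄⁽ⁱ⁾(x) = (1/N)Σ_{k≠i} f(x,ξᵏ). Then ‖x̄⁽ⁱ⁾ - x̄‖ ≤ 2M/(μN), and consequently |f(x̄⁽ⁱ⁾,ξ) - f(x̄,ξ)| ≤ 2M²/(μN) for every ξ. -/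
open Finset RealInnerProductSpace

/-- Quadratic growth at a minimizer of a strongly convex function over a convex set. -/
lemma quad_growth_aux {n : ℕ} (Q : Set (EuclideanSpace ℝ (Fin n))) (hQ : Convex ℝ Q)
    (F : EuclideanSpace ℝ (Fin n) → ℝ) (G : EuclideanSpace ℝ (Fin n) → EuclideanSpace ℝ (Fin n))
    (c : ℝ)
    (hsc : ∀ x ∈ Q, ∀ y ∈ Q, F x + ⟪G x, y - x⟫ + c / 2 * ‖y - x‖ ^ 2 ≤ F y)
    (xm : EuclideanSpace ℝ (Fin n)) (hxm : xm ∈ Q) (hmin : ∀ y ∈ Q, F xm ≤ F y) :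
    ∀ y ∈ Q, F xm + c / 2 * ‖y - xm‖ ^ 2 ≤ F y := by
  intro y hy
  set r := ‖y - xm‖ with hr
  have key : ∀ t : ℝ, 0 < t → t < 1 → c / 2 * r ^ 2 * (1 - t) ≤ F y - F xm := by
    intro t ht0 ht1
    set z := (1 - t) • xm + t • y with hz
    have hzQ : z ∈ Q := hQ hxm hy (by linarith) ht0.le (by ring)
    have h1 := hsc z hzQ xm hxm
    have h2 := hsc z hzQ y hy
    have hxmz : xm - z = t • (xm - y) := by rw [hz]; module
    have hyz : y - z = (1 - t) • (y - xm) := by rw [hz]; module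
    have hn1 : ‖xm - z‖ ^ 2 = t ^ 2 * r ^ 2 := by
      rw [hxmz, norm_smul, mul_pow, Real.norm_eq_abs, sq_abs, hr, norm_sub_rev y xm]
    have hn2 : ‖y - z‖ ^ 2 = (1 - t) ^ 2 * r ^ 2 := by
      rw [hyz, norm_smul, mul_pow, Real.norm_eq_abs, sq_abs]
    rw [hn1] at h1
    rw [hn2] at h2
    set a := ⟪G z, xm - z⟫ with ha
    set b := ⟪G z, y - z⟫ with hb
    have hinner : (1 - t) * a + t * b = 0 := by
      have h0 : (1 - t) • (xm - z) + t • (y - z) = 0 := by rw [hz]; module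
      have h0' : ⟪G z, (1 - t) • (xm - z) + t • (y - z)⟫ = (0 : ℝ) := by
        rw [h0, inner_zero_right]
      rw [inner_add_right, real_inner_smul_right, real_inner_smul_right] at h0'
      rw [ha, hb]; linarith
    have hFz : F xm ≤ F z := hmin z hzQ
    have hA : (1 - t) * (F z + a + c / 2 * (t ^ 2 * r ^ 2)) ≤ (1 - t) * F xm :=
      mul_le_mul_of_nonneg_left h1 (by linarith)
    have hB : t * (F z + b + c / 2 * ((1 - t) ^ 2 * r ^ 2)) ≤ t * F y :=
      mul_le_mul_of_nonneg_left h2 ht0.le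
    have ht : t * (c / 2 * r ^ 2 * (1 - t)) ≤ t * (F y - F xm) := by nlinarith [hA, hB, hinner, hFz]
    exact le_of_mul_le_mul_left ht ht0
  have hb0 : 0 ≤ c / 2 * r ^ 2 ∨ c / 2 * r ^ 2 < 0 := le_or_gt _ _
  have hfinal : c / 2 * r ^ 2 ≤ F y - F xm := by
    refine le_of_forall_pos_le_add ?_
    intro ε hε
    rcases le_or_gt (c / 2 * r ^ 2) 0 with hb | hb
    · have := key (1/2) (by norm_num) (by norm_num)
      nlinarith
    · set t : ℝ := min (1/2) (ε / (c / 2 * r ^ 2 + 1)) with htdef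
      have ht0 : 0 < t := lt_min (by norm_num) (by positivity)
      have ht1 : t < 1 := lt_of_le_of_lt (min_le_left _ _) (by norm_num)
      have hk := key t ht0 ht1
      have htle : t ≤ ε / (c / 2 * r ^ 2 + 1) := min_le_right _ _
      have : c / 2 * r ^ 2 * t ≤ ε := by
        rw [div_eq_inv_mul] at htle
        have h1 : c / 2 * r ^ 2 * t ≤ c / 2 * r ^ 2 * ((c / 2 * r ^ 2 + 1)⁻¹ * ε) :=
          mul_le_mul_of_nonneg_left htle hb.le
        have h2 : c / 2 * r ^ 2 * ((c / 2 * r ^ 2 + 1)⁻¹ * ε) ≤ ε := by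
          rw [← mul_assoc]
          have : c / 2 * r ^ 2 * (c / 2 * r ^ 2 + 1)⁻¹ ≤ 1 := by
            rw [mul_inv_le_iff₀ (by linarith)]; linarith
          nlinarith
        linarith
      linarith
  linarith

/-- Uniform stability of the empirical minimizer under strong convexity:
the leave-one-out minimizer `x̄⁽ⁱ⁾` satisfies `‖x̄⁽ⁱ⁾ - x̄‖ ≤ 2M/(μN)` and hence
`|f(x̄⁽ⁱ⁾,ξ) - f(x̄,ξ)| ≤ 2M²/(μN)` for all `ξ`. -/
theorem uniform_stability_erm
    {n : ℕ} {Ξ : Type*} (Q : Set (EuclideanSpace ℝ (Fin n))) (hQ : Convex ℝ Q)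
    (f : EuclideanSpace ℝ (Fin n) → Ξ → ℝ)
    (g : EuclideanSpace ℝ (Fin n) → Ξ → EuclideanSpace ℝ (Fin n))
    (μ M : ℝ) (hμ : 0 < μ) (hM : 0 < M)
    (hsc : ∀ ξ, ∀ x ∈ Q, ∀ y ∈ Q,
      f y ξ ≥ f x ξ + ⟪g x ξ, y - x⟫ + μ / 2 * ‖y - x‖ ^ 2)
    (hlip : ∀ ξ, ∀ x ∈ Q, ∀ y ∈ Q, |f y ξ - f x ξ| ≤ M * ‖y - x‖)
    (N : ℕ) (hN : 0 < N) (ξs : Fin N → Ξ) (i : Fin N)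
    (xbar xbari : EuclideanSpace ℝ (Fin n))
    (hxbar_mem : xbar ∈ Q)
    (hxbar_min : ∀ y ∈ Q,
      (1 / (N : ℝ)) * ∑ k, f xbar (ξs k) ≤ (1 / (N : ℝ)) * ∑ k, f y (ξs k))
    (hxbari_mem : xbari ∈ Q)
    (hxbari_min : ∀ y ∈ Q,
      (1 / (N : ℝ)) * ∑ k ∈ univ.erase i, f xbari (ξs k)
        ≤ (1 / (N : ℝ)) * ∑ k ∈ univ.erase i, f y (ξs k)) :
    ‖xbari - xbar‖ ≤ 2 * M / (μ * N) ∧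
    ∀ ξ : Ξ, |f xbari ξ - f xbar ξ| ≤ 2 * M ^ 2 / (μ * N) := by
  have hNpos : (0 : ℝ) < N := Nat.cast_pos.mpr hN
  have hNinv : (0 : ℝ) < 1 / N := by positivity
  set S : EuclideanSpace ℝ (Fin n) → ℝ := fun x => ∑ k, f x (ξs k) with hS
  set T : EuclideanSpace ℝ (Fin n) → ℝ := fun x => ∑ k ∈ univ.erase i, f x (ξs k) with hT
  set Gf : EuclideanSpace ℝ (Fin n) → EuclideanSpace ℝ (Fin n) :=
    fun x => ∑ k, g x (ξs k) with hGf
  have hSmin : ∀ y ∈ Q, S xbar ≤ S y := fun y hy =>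
    le_of_mul_le_mul_left (hxbar_min y hy) hNinv
  have hTmin : T xbari ≤ T xbar :=
    le_of_mul_le_mul_left (hxbari_min xbar hxbar_mem) hNinv
  have hSsc : ∀ x ∈ Q, ∀ y ∈ Q,
      S x + ⟪Gf x, y - x⟫ + (N * μ) / 2 * ‖y - x‖ ^ 2 ≤ S y := by
    intro x hx y hy
    have hsum : ∑ k, (f x (ξs k) + ⟪g x (ξs k), y - x⟫ + μ / 2 * ‖y - x‖ ^ 2)
        ≤ ∑ k, f y (ξs k) :=
      Finset.sum_le_sum (fun k _ => hsc (ξs k) x hx y hy)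
    have hexp : ∑ k, (f x (ξs k) + ⟪g x (ξs k), y - x⟫ + μ / 2 * ‖y - x‖ ^ 2)
        = S x + ⟪Gf x, y - x⟫ + (N * μ) / 2 * ‖y - x‖ ^ 2 := by
      rw [Finset.sum_add_distrib, Finset.sum_add_distrib, Finset.sum_const,
        Finset.card_univ, Fintype.card_fin, hGf]
      simp only [sum_inner, hS]
      ring_nf
    rw [hexp] at hsum
    exact hsum
  have hquad := quad_growth_aux Q hQ S Gf (N * μ) hSsc xbar hxbar_mem hSmin xbari hxbari_mem
  set r := ‖xbari - xbar‖ with hrdef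
  have hsplit : ∀ x : EuclideanSpace ℝ (Fin n), S x = f x (ξs i) + T x := by
    intro x
    rw [hS, hT]
    exact (Finset.add_sum_erase univ (fun k => f x (ξs k)) (mem_univ i)).symm
  have hkey : (N * μ) / 2 * r ^ 2 ≤ f xbari (ξs i) - f xbar (ξs i) := by
    have h1 := hquad
    rw [hsplit xbari, hsplit xbar] at h1
    linarith
  have hlipi := hlip (ξs i) xbar hxbar_mem xbari hxbari_mem
  have hMr : (N * μ) / 2 * r ^ 2 ≤ M * r :=
    le_trans hkey (le_trans (le_abs_self _) hlipi)
  have hrle : r ≤ 2 * M / (μ * N) := by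
    rcases (norm_nonneg (xbari - xbar)).eq_or_lt with h0 | h0
    · rw [← hrdef] at h0
      rw [← h0]; positivity
    · rw [← hrdef] at h0
      rw [le_div_iff₀ (by positivity)]
      have hmul : r * (μ * N) * r ≤ 2 * M * r := by nlinarith
      exact le_of_mul_le_mul_right hmul h0
  constructor
  · exact hrle
  · intro ξ
    have h1 := hlip ξ xbar hxbar_mem xbari hxbari_mem
    have h2 : M * r ≤ M * (2 * M / (μ * N)) := mul_le_mul_of_nonneg_left hrle hM.le
    have h3 : M * (2 * M / (μ * N)) = 2 * M ^ 2 / (μ * N) := by ring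
    linarith [h1, h2, h3.le]
end

section
/- Online regret bound of SGD with step γ_k = 1/(μk) in the strongly convex case: for iterates x^{k+1} = π_Q(x^k - γ_k ∇_x f(x^k, ξ^k)) with each f(·,ξ) μ-strongly convex and M-Lipschitz on Q, (1/N)Σ_{k=1}^N f(x^k, ξ^k) ≤ (1/N)Σ_{k=1}^N f(x*, ξ^k) + M²(1 + log N)/(2μN) for any fixed x* ∈ Q. -/
open Finset RealInnerProductSpace

/-- Online regret bound for projected SGD with step `γₖ = 1/(μk)` in the strongly
convex case: `(1/N)Σₖ f(xᵏ,ξᵏ) ≤ (1/N)Σₖ f(x*,ξᵏ) + M²(1 + log N)/(2μN)`. -/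
theorem projected_sgd_regret_strongly_convex
    {n : ℕ} {Ξ : Type*} (Q : Set (EuclideanSpace ℝ (Fin n))) (hQne : Q.Nonempty)
    (hQconv : Convex ℝ Q) (hQclosed : IsClosed Q)
    (proj : EuclideanSpace ℝ (Fin n) → EuclideanSpace ℝ (Fin n))
    (hproj_mem : ∀ u, proj u ∈ Q)
    (hproj_nonexp : ∀ u, ∀ z ∈ Q, ‖proj u - z‖ ≤ ‖u - z‖)
    (f : EuclideanSpace ℝ (Fin n) → Ξ → ℝ)
    (N : ℕ) (hN : 0 < N) (ξ : ℕ → Ξ)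
    (M μ : ℝ) (hM : 0 < M) (hμ : 0 < μ)
    (x : ℕ → EuclideanSpace ℝ (Fin n)) (g : ℕ → EuclideanSpace ℝ (Fin n))
    (hx1 : x 1 ∈ Q)
    (xstar : EuclideanSpace ℝ (Fin n)) (hxstar : xstar ∈ Q)
    (hgsub : ∀ k ∈ Icc 1 N, ∀ z ∈ Q,
      f z (ξ k) ≥ f (x k) (ξ k) + ⟪g k, z - x k⟫ + μ / 2 * ‖z - x k‖ ^ 2)
    (hgbdd : ∀ k ∈ Icc 1 N, ‖g k‖ ≤ M)
    (hiter : ∀ k ∈ Icc 1 N, x (k + 1) = proj (x k - (1 / (μ * k)) • g k)) :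
    (1 / (N : ℝ)) * ∑ k ∈ Icc 1 N, f (x k) (ξ k)
      ≤ (1 / (N : ℝ)) * ∑ k ∈ Icc 1 N, f xstar (ξ k)
        + M ^ 2 * (1 + Real.log N) / (2 * μ * N) := by
  have hNpos : (0:ℝ) < N := by exact_mod_cast hN
  set r : ℕ → ℝ := fun k => ‖x k - xstar‖ ^ 2 with hr_def
  set a : ℕ → ℝ := fun k => ((k:ℝ) - 1) * r k with ha_def
  -- per-step bound
  have key : ∀ k ∈ Icc 1 N,
      f (x k) (ξ k) - f xstar (ξ k)
        ≤ μ / 2 * (a k - a (k+1)) + M ^ 2 / (2 * μ) * (1 / (k:ℝ)) := by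
    intro k hk
    obtain ⟨hk1, hkN⟩ := mem_Icc.mp hk
    have hkpos : (0:ℝ) < k := by exact_mod_cast hk1
    have hc : (0:ℝ) < μ * k := by positivity
    have hG2 : ‖g k‖ ^ 2 ≤ M ^ 2 := by
      have := hgbdd k hk
      nlinarith [norm_nonneg (g k)]
    -- projection step
    have hstep : r (k+1) ≤ ‖(x k - xstar) - (1/(μ*k)) • g k‖ ^ 2 := by
      have h1 := hproj_nonexp (x k - (1 / (μ * k)) • g k) xstar hxstar
      rw [← hiter k hk] at h1
      have h2 : x k - (1 / (μ * (k:ℝ))) • g k - xstar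
          = (x k - xstar) - (1/(μ*(k:ℝ))) • g k := by abel
      rw [h2] at h1
      exact pow_le_pow_left₀ (norm_nonneg _) h1 2
    have hexp : ‖(x k - xstar) - (1/(μ*(k:ℝ))) • g k‖ ^ 2
        = r k - 2 * (1/(μ*(k:ℝ))) * ⟪g k, x k - xstar⟫
          + (1/(μ*(k:ℝ)))^2 * ‖g k‖^2 := by
      rw [norm_sub_sq_real, real_inner_smul_right, norm_smul, mul_pow]
      have hn : ‖(1/(μ*(k:ℝ)) : ℝ)‖ = 1/(μ*(k:ℝ)) := by
        rw [Real.norm_eq_abs, abs_of_pos (by positivity)]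
      rw [hn, real_inner_comm]
      simp only [hr_def]
      ring
    rw [hexp] at hstep
    have hmul := mul_le_mul_of_nonneg_left hstep hc.le
    have heq : (μ*(k:ℝ)) * (r k - 2 * (1/(μ*(k:ℝ))) * ⟪g k, x k - xstar⟫
          + (1/(μ*(k:ℝ)))^2 * ‖g k‖^2)
        = (μ*(k:ℝ)) * r k - 2 * ⟪g k, x k - xstar⟫ + (1/(μ*(k:ℝ))) * ‖g k‖^2 := by
      field_simp
    rw [heq] at hmul
    -- strong convexity at xstar
    have hsc := hgsub k hk xstar hxstar
    rw [show xstar - x k = -(x k - xstar) from by abel, inner_neg_right, norm_neg] at hsc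
    have hrk : ‖x k - xstar‖ ^ 2 = r k := rfl
    rw [hrk] at hsc
    have hG2' : (1/(μ*(k:ℝ))) * ‖g k‖^2 ≤ (1/(μ*(k:ℝ))) * M^2 :=
      mul_le_mul_of_nonneg_left hG2 (by positivity)
    have e : μ / 2 * (a k - a (k+1)) + M ^ 2 / (2 * μ) * (1 / (k:ℝ))
        = ((μ*(k:ℝ)) * r k - (μ*(k:ℝ)) * r (k+1)) / 2 - μ/2 * r k
          + (1/(μ*(k:ℝ))) * M^2 / 2 := by
      simp only [ha_def]
      push_cast
      field_simp
      ring
    rw [e]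
    linarith
  -- sum the per-step bounds
  have hsum : ∑ k ∈ Icc 1 N, (f (x k) (ξ k) - f xstar (ξ k))
      ≤ μ / 2 * ∑ k ∈ Icc 1 N, (a k - a (k+1))
        + M ^ 2 / (2 * μ) * ∑ k ∈ Icc 1 N, (1 / (k:ℝ)) := by
    rw [mul_sum, mul_sum, ← sum_add_distrib]
    exact sum_le_sum key
  have htel : ∀ m : ℕ, ∑ k ∈ Icc 1 m, (a k - a (k+1)) = a 1 - a (m+1) := by
    intro m
    induction m with
    | zero => simp [ha_def]
    | succ m ih =>
        rw [Finset.sum_Icc_succ_top (Nat.succ_le_succ (Nat.zero_le m)), ih]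
        ring
  have ha1 : a 1 = 0 := by simp [ha_def]
  have haN : 0 ≤ a (N+1) := by
    simp only [ha_def]
    push_cast
    have : (0:ℝ) ≤ r (N+1) := sq_nonneg _
    nlinarith
  have hharm : ∑ k ∈ Icc 1 N, (1 / (k:ℝ)) ≤ 1 + Real.log N := by
    have h1 : ∑ k ∈ Icc 1 N, (1 / (k:ℝ)) = ((harmonic N : ℚ) : ℝ) := by
      simp_rw [harmonic_eq_sum_Icc, Rat.cast_sum, Rat.cast_inv, Rat.cast_natCast,
        one_div]
    rw [h1]
    exact harmonic_le_one_add_log N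
  have hC : ∑ k ∈ Icc 1 N, (f (x k) (ξ k) - f xstar (ξ k))
      ≤ M ^ 2 * (1 + Real.log N) / (2 * μ) := by
    have h2 : μ / 2 * ∑ k ∈ Icc 1 N, (a k - a (k+1)) ≤ 0 := by
      rw [htel N, ha1]
      nlinarith
    have h3 : M ^ 2 / (2 * μ) * ∑ k ∈ Icc 1 N, (1 / (k:ℝ))
        ≤ M ^ 2 / (2 * μ) * (1 + Real.log N) :=
      mul_le_mul_of_nonneg_left hharm (by positivity)
    calc _ ≤ _ := hsum
      _ ≤ 0 + M ^ 2 / (2 * μ) * (1 + Real.log N) := by linarith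
      _ = M ^ 2 * (1 + Real.log N) / (2 * μ) := by ring
  rw [sum_sub_distrib] at hC
  have hfin := mul_le_mul_of_nonneg_left hC (by positivity : (0:ℝ) ≤ 1 / N)
  have : (1 / (N:ℝ)) * (M ^ 2 * (1 + Real.log N) / (2 * μ))
      = M ^ 2 * (1 + Real.log N) / (2 * μ * N) := by
    field_simp
  linarith [hfin, this.ge]
end

section
/- One-step linear contraction of SGD under overparametrization-type conditions: with the assumptions of the previous statement plus μ-strong convexity of f in the sense f(x*) ≥ f(x) + ⟨∇f(x), x* - x⟩ + (μ/2)‖x* - x‖₂², the SGD step x⁺ = x - γ∇_x f(x,ξ) with γ ≤ 1/(2L) satisfies E_ξ[‖x⁺ - x*‖₂²] ≤ (1 - γμ)‖x - x*‖₂² + 2γ²σ*². -/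
open MeasureTheory RealInnerProductSpace

section Aux

variable {E : Type*} [NormedAddCommGroup E] [InnerProductSpace ℝ E] [CompleteSpace E]

lemma line_hasDerivAt {g : E → ℝ} {g' : E} (x v : E) (t : ℝ)
    (hg : HasGradientAt g g' (x + t • v)) :
    HasDerivAt (fun s : ℝ => g (x + s • v)) ⟪g', v⟫ t := by
  have hc : HasDerivAt (fun s : ℝ => x + s • v) v t := by
    simpa using ((hasDerivAt_id t).smul_const v).const_add x
  have hF := hasGradientAt_iff_hasFDerivAt.mp hg
  have := hF.comp_hasDerivAt t hc
  simpa [InnerProductSpace.toDual_apply_apply, Function.comp_def] using this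

lemma convex_grad_ineq {g : E → ℝ} {g' : E → E} (hconv : ConvexOn ℝ Set.univ g)
    (hg : ∀ z, HasGradientAt g (g' z) z) (x y : E) :
    g x + ⟪g' x, y - x⟫ ≤ g y := by
  set v := y - x with hv
  have h0 : HasDerivAt (fun s : ℝ => g (x + s • v)) ⟪g' x, v⟫ 0 := by
    have := line_hasDerivAt x v 0 (by simpa using hg x)
    simpa using this
  have hφconv : ConvexOn ℝ Set.univ (fun s : ℝ => g (x + s • v)) := by
    have := hconv.comp_affineMap
      ({ toFun := fun s => x + s • v
         linear := LinearMap.toSpanSingleton ℝ E v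
         map_vadd' := by
           intro p q
           simp [LinearMap.toSpanSingleton_apply, add_smul]
           abel } : ℝ →ᵃ[ℝ] E)
    simpa [Function.comp_def] using this
  have := hφconv.le_slope_of_hasDerivAt (Set.mem_univ (0:ℝ)) (Set.mem_univ (1:ℝ))
    one_pos h0
  rw [slope_def_field] at this
  simp at this
  have h1 : x + v = y := by rw [hv]; abel
  rw [h1] at this
  linarith

lemma descent_lemma {g : E → ℝ} {g' : E → E} (hg : ∀ z, HasGradientAt g (g' z) z)
    {L : ℝ} (hL : 0 ≤ L) (hlip : ∀ u v, ‖g' u - g' v‖ ≤ L * ‖u - v‖) (x y : E) :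
    g y ≤ g x + ⟪g' x, y - x⟫ + L / 2 * ‖y - x‖ ^ 2 := by
  set v := y - x with hv
  set φ : ℝ → ℝ := fun s => g (x + s • v) with hφ
  set ψ : ℝ → ℝ := fun s => ⟪g' (x + s • v), v⟫ with hψ
  have hder : ∀ t : ℝ, HasDerivAt φ (ψ t) t := fun t => line_hasDerivAt x v t (hg _)
  have hg'cont : Continuous g' := by
    refine (LipschitzWith.of_dist_le_mul (K := L.toNNReal) fun u w => ?_).continuous
    rw [dist_eq_norm, dist_eq_norm, Real.coe_toNNReal L hL]
    exact hlip u w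
  have hψcont : Continuous ψ := by
    apply Continuous.inner
    · exact hg'cont.comp (by continuity)
    · exact continuous_const
  have hFTC : φ 1 - φ 0 = ∫ t in (0:ℝ)..1, ψ t := by
    refine (intervalIntegral.integral_eq_sub_of_hasDerivAt (fun t _ => hder t) ?_).symm
    exact hψcont.intervalIntegrable 0 1
  have hbound : ∀ t ∈ Set.Icc (0:ℝ) 1, ψ t ≤ ⟪g' x, v⟫ + L * t * ‖v‖ ^ 2 := by
    intro t ht
    have h1 : ψ t - ⟪g' x, v⟫ = ⟪g' (x + t • v) - g' x, v⟫ := by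
      rw [inner_sub_left]
    have h2 : ⟪g' (x + t • v) - g' x, v⟫ ≤ ‖g' (x + t • v) - g' x‖ * ‖v‖ :=
      real_inner_le_norm _ _
    have h3 : ‖g' (x + t • v) - g' x‖ ≤ L * (t * ‖v‖) := by
      have := hlip (x + t • v) x
      simpa [norm_smul, abs_of_nonneg ht.1, mul_assoc] using this
    nlinarith [norm_nonneg v, mul_le_mul_of_nonneg_right h3 (norm_nonneg v)]
  have hint : (∫ t in (0:ℝ)..1, ψ t) ≤ ∫ t in (0:ℝ)..1, (⟪g' x, v⟫ + L * t * ‖v‖ ^ 2) := by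
    apply intervalIntegral.integral_mono_on zero_le_one
      (hψcont.intervalIntegrable 0 1)
      ((by continuity : Continuous fun t : ℝ => ⟪g' x, v⟫ + L * t * ‖v‖ ^ 2).intervalIntegrable 0 1)
    exact hbound
  have hval : (∫ t in (0:ℝ)..1, (⟪g' x, v⟫ + L * t * ‖v‖ ^ 2)) = ⟪g' x, v⟫ + L / 2 * ‖v‖ ^ 2 := by
    rw [intervalIntegral.integral_add (by apply intervalIntegrable_const)
      (by apply Continuous.intervalIntegrable; continuity)]
    have h1 : (fun t : ℝ => L * t * ‖v‖ ^ 2) = fun t : ℝ => (L * ‖v‖ ^ 2) * t := by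
      funext t; ring
    rw [h1, intervalIntegral.integral_const_mul, integral_id]
    simp
    ring
  have hφ0 : φ 0 = g x := by simp [hφ]
  have hφ1 : φ 1 = g y := by simp [hφ, hv]
  rw [hφ0, hφ1] at hFTC
  linarith [hFTC, hint.trans_eq hval]

lemma cocoercivity {g : E → ℝ} {g' : E → E} (hconv : ConvexOn ℝ Set.univ g)
    (hg : ∀ z, HasGradientAt g (g' z) z)
    {L : ℝ} (hL : 0 < L) (hlip : ∀ u v, ‖g' u - g' v‖ ≤ L * ‖u - v‖) (x y : E) :
    ‖g' y - g' x‖ ^ 2 ≤ 2 * L * (g y - g x - ⟪g' x, y - x⟫) := by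
  set h : E → ℝ := fun z => g z - ⟪g' x, z⟫ with hh
  set h' : E → E := fun z => g' z - g' x with hh'
  have hgh : ∀ z, HasGradientAt h (h' z) z := by
    intro z
    rw [hasGradientAt_iff_hasFDerivAt]
    have h1 := hasGradientAt_iff_hasFDerivAt.mp (hg z)
    have h2 : HasFDerivAt (fun w : E => (⟪g' x, w⟫ : ℝ))
        (InnerProductSpace.toDual ℝ E (g' x)) z := by
      exact (InnerProductSpace.toDual ℝ E (g' x)).hasFDerivAt
    have := h1.sub h2
    simpa [hh, hh', map_sub, Pi.sub_def] using this
  have hlip' : ∀ u v, ‖h' u - h' v‖ ≤ L * ‖u - v‖ := by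
    intro u v; simpa [hh', sub_sub_sub_cancel_right] using hlip u v
  -- h x ≤ h z for all z, from convexity of g
  have hmin : ∀ z, h x ≤ h z := by
    intro z
    have := convex_grad_ineq hconv hg x z
    simp only [hh, inner_sub_right]
    linarith [this, inner_sub_right (𝕜 := ℝ) (g' x) z x]
  set z := y - (1 / L) • h' y with hz
  have hdesc := descent_lemma hgh hL.le hlip' y z
  have h1 : z - y = -((1/L) • h' y) := by rw [hz]; abel
  have h2 : ⟪h' y, z - y⟫ = -(1/L) * ‖h' y‖ ^ 2 := by
    rw [h1, inner_neg_right, real_inner_smul_right, real_inner_self_eq_norm_sq]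
    ring
  have h3 : ‖z - y‖ ^ 2 = (1/L)^2 * ‖h' y‖ ^ 2 := by
    rw [h1, norm_neg, norm_smul, Real.norm_eq_abs, abs_of_pos (by positivity : (0:ℝ) < 1/L),
      mul_pow]
  have hzy := hmin z
  have hkey : h x ≤ h y - 1/(2*L) * ‖h' y‖ ^ 2 := by
    have : L / 2 * ((1/L)^2 * ‖h' y‖ ^ 2) = 1/(2*L) * ‖h' y‖^2 := by
      field_simp
    calc h x ≤ h z := hzy
    _ ≤ h y + ⟪h' y, z - y⟫ + L/2 * ‖z - y‖^2 := hdesc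
    _ = h y - 1/L * ‖h' y‖^2 + 1/(2*L) * ‖h' y‖^2 := by rw [h2, h3, this]; ring
    _ = h y - 1/(2*L) * ‖h' y‖^2 := by field_simp; ring
  have hxy : h y - h x = g y - g x - ⟪g' x, y - x⟫ := by
    simp only [hh, inner_sub_right]; ring
  have : 1/(2*L) * ‖h' y‖^2 ≤ h y - h x := by linarith
  rw [hxy] at this
  have := mul_le_mul_of_nonneg_left this (by positivity : (0:ℝ) ≤ 2*L)
  calc ‖g' y - g' x‖^2 = ‖h' y‖^2 := rfl
  _ = 2*L * (1/(2*L) * ‖h' y‖^2) := by field_simp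
  _ ≤ 2*L * (g y - g x - ⟪g' x, y - x⟫) := this

end Aux

/-- One-step linear contraction of SGD under overparametrization-type conditions:
with `γ ≤ 1/(2L)`, `E_ξ‖x - γ∇f(x,ξ) - x*‖² ≤ (1 - γμ)‖x - x*‖² + 2γ²σ*²`. -/
theorem sgd_one_step_contraction
    {n : ℕ} {Ξ : Type*} [MeasurableSpace Ξ] (ν : Measure Ξ) [IsProbabilityMeasure ν]
    (f : EuclideanSpace ℝ (Fin n) → Ξ → ℝ)
    (G : EuclideanSpace ℝ (Fin n) → Ξ → EuclideanSpace ℝ (Fin n))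
    (L μ : ℝ) (hL : 0 < L) (hμ : 0 < μ)
    (hconv : ∀ ξ, ConvexOn ℝ Set.univ (fun x => f x ξ))
    (hgrad : ∀ ξ x, HasGradientAt (fun y => f y ξ) (G x ξ) x)
    (hlip : ∀ ξ x y, ‖G x ξ - G y ξ‖ ≤ L * ‖x - y‖)
    (F : EuclideanSpace ℝ (Fin n) → ℝ) (hF : ∀ x, F x = ∫ ξ, f x ξ ∂ν)
    (hfint : ∀ x, Integrable (fun ξ => f x ξ) ν)
    (hGint : ∀ x, Integrable (fun ξ => G x ξ) ν)
    (hGsqint : ∀ x, Integrable (fun ξ => ‖G x ξ‖ ^ 2) ν)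
    (xstar : EuclideanSpace ℝ (Fin n)) (hmin : ∫ ξ, G xstar ξ ∂ν = 0)
    (hsc : ∀ x, F xstar ≥ F x + ⟪∫ ξ, G x ξ ∂ν, xstar - x⟫ + μ / 2 * ‖xstar - x‖ ^ 2)
    (σstar2 : ℝ) (hσ : σstar2 = ∫ ξ, ‖G xstar ξ‖ ^ 2 ∂ν)
    (γ : ℝ) (hγ0 : 0 < γ) (hγ : γ ≤ 1 / (2 * L)) :
    ∀ x, (∫ ξ, ‖(x - γ • G x ξ) - xstar‖ ^ 2 ∂ν)
      ≤ (1 - γ * μ) * ‖x - xstar‖ ^ 2 + 2 * γ ^ 2 * σstar2 := by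
  intro x
  set d := x - xstar with hd
  set gbar := ∫ ξ, G x ξ ∂ν with hgbar
  -- pointwise expansion of the squared norm
  have hid : ∀ ξ, ‖(x - γ • G x ξ) - xstar‖ ^ 2
      = ‖d‖ ^ 2 - 2 * γ * ⟪d, G x ξ⟫ + γ ^ 2 * ‖G x ξ‖ ^ 2 := by
    intro ξ
    have h0 : (x - γ • G x ξ) - xstar = d - γ • G x ξ := by rw [hd]; abel
    rw [h0, norm_sub_sq_real, real_inner_smul_right, norm_smul]
    simp [mul_pow, sq_abs]
    ring
  have hI1 : Integrable (fun ξ => ⟪d, G x ξ⟫) ν := (hGint x).const_inner d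
  -- integrated expansion
  have hInt : (∫ ξ, ‖(x - γ • G x ξ) - xstar‖ ^ 2 ∂ν)
      = ‖d‖ ^ 2 - 2 * γ * ⟪d, gbar⟫ + γ ^ 2 * ∫ ξ, ‖G x ξ‖ ^ 2 ∂ν := by
    calc (∫ ξ, ‖(x - γ • G x ξ) - xstar‖ ^ 2 ∂ν)
        = ∫ ξ, (‖d‖ ^ 2 - 2 * γ * ⟪d, G x ξ⟫ + γ ^ 2 * ‖G x ξ‖ ^ 2) ∂ν := by
          simp_rw [hid]
      _ = ‖d‖ ^ 2 - 2 * γ * ⟪d, gbar⟫ + γ ^ 2 * ∫ ξ, ‖G x ξ‖ ^ 2 ∂ν := by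
          have ha : Integrable (fun ξ => ‖d‖ ^ 2 - 2 * γ * ⟪d, G x ξ⟫) ν := by
            exact (integrable_const _).sub (hI1.const_mul _)
          have hb : Integrable (fun ξ => γ ^ 2 * ‖G x ξ‖ ^ 2) ν := by
            exact (hGsqint x).const_mul _
          have hc : Integrable (fun ξ => 2 * γ * ⟪d, G x ξ⟫) ν := by
            exact hI1.const_mul _
          rw [integral_add ha hb, integral_sub (integrable_const _) hc,
            integral_const, integral_const_mul, integral_const_mul,
            integral_inner (hGint x) d]
          simp [measure_univ, hgbar]
  -- cocoercivity pointwise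
  have hco : ∀ ξ, ‖G x ξ - G xstar ξ‖ ^ 2
      ≤ 2 * L * (f x ξ - f xstar ξ - ⟪d, G xstar ξ⟫) := by
    intro ξ
    have := cocoercivity (hconv ξ) (fun z => hgrad ξ z) hL (fun u v => hlip ξ u v) xstar x
    rwa [real_inner_comm, ← hd] at this
  have hsq : ∀ ξ, ‖G x ξ‖ ^ 2
      ≤ 4 * L * (f x ξ - f xstar ξ - ⟪d, G xstar ξ⟫) + 2 * ‖G xstar ξ‖ ^ 2 := by
    intro ξ
    have h1 := hco ξ
    have h2 : ‖G x ξ‖ ≤ ‖G x ξ - G xstar ξ‖ + ‖G xstar ξ‖ := by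
      simpa using norm_add_le (G x ξ - G xstar ξ) (G xstar ξ)
    nlinarith [norm_nonneg (G x ξ - G xstar ξ), norm_nonneg (G xstar ξ), norm_nonneg (G x ξ),
      sq_nonneg (‖G x ξ - G xstar ξ‖ - ‖G xstar ξ‖),
      mul_le_mul h2 h2 (norm_nonneg (G x ξ)) (by positivity)]
  have hIb : Integrable (fun ξ =>
      4 * L * (f x ξ - f xstar ξ - ⟪d, G xstar ξ⟫) + 2 * ‖G xstar ξ‖ ^ 2) ν :=
    ((((hfint x).sub (hfint xstar)).sub ((hGint xstar).const_inner d)).const_mul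
      (4 * L)).add ((hGsqint xstar).const_mul 2)
  -- second moment bound
  have hS : (∫ ξ, ‖G x ξ‖ ^ 2 ∂ν) ≤ 4 * L * (F x - F xstar) + 2 * σstar2 := by
    have hm := integral_mono (hGsqint x) hIb hsq
    have hId : Integrable (fun ξ => ⟪d, G xstar ξ⟫) ν := (hGint xstar).const_inner d
    have hIa : Integrable (fun ξ => f x ξ - f xstar ξ) ν := by
      exact (hfint x).sub (hfint xstar)
    have hIa2 : Integrable (fun ξ => f x ξ - f xstar ξ - ⟪d, G xstar ξ⟫) ν := by
      exact hIa.sub hId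
    have hIa3 : Integrable (fun ξ => 4 * L * (f x ξ - f xstar ξ - ⟪d, G xstar ξ⟫)) ν := by
      exact hIa2.const_mul _
    have hIa4 : Integrable (fun ξ => 2 * ‖G xstar ξ‖ ^ 2) ν := by
      exact (hGsqint xstar).const_mul 2
    rw [integral_add hIa3 hIa4, integral_const_mul, integral_const_mul,
      integral_sub hIa hId, integral_sub (hfint x) (hfint xstar),
      integral_inner (hGint xstar) d, hmin] at hm
    simp only [inner_zero_right, sub_zero] at hm
    rw [hF x, hF xstar, hσ]
    linarith
  -- F x ≥ F xstar
  have hFge : F xstar ≤ F x := by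
    have hpt : ∀ ξ, f xstar ξ + ⟪d, G xstar ξ⟫ ≤ f x ξ := by
      intro ξ
      have := convex_grad_ineq (hconv ξ) (fun z => hgrad ξ z) xstar x
      rwa [real_inner_comm, ← hd] at this
    have hId : Integrable (fun ξ => ⟪d, G xstar ξ⟫) ν := (hGint xstar).const_inner d
    have hIc : Integrable (fun ξ => f xstar ξ + ⟪d, G xstar ξ⟫) ν := by
      exact (hfint xstar).add hId
    have hm := integral_mono hIc (hfint x) hpt
    rw [integral_add (hfint xstar) hId, integral_inner (hGint xstar) d, hmin] at hm
    simp only [inner_zero_right, add_zero] at hm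
    rw [hF x, hF xstar]
    exact hm
  -- strong convexity inequality
  have hA : F x - F xstar + μ / 2 * ‖d‖ ^ 2 ≤ ⟪d, gbar⟫ := by
    have h0 := hsc x
    have h1 : ⟪gbar, xstar - x⟫ = -⟪d, gbar⟫ := by
      rw [real_inner_comm, show xstar - x = -d by rw [hd]; abel, inner_neg_left]
    have h2 : ‖xstar - x‖ = ‖d‖ := norm_sub_rev _ _
    rw [h1, h2] at h0
    linarith
  have h2γL : γ * (2 * L) ≤ 1 := (le_div_iff₀ (by positivity)).mp hγ
  rw [hInt]
  nlinarith [mul_le_mul_of_nonneg_left hS (sq_nonneg γ),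
    mul_le_mul_of_nonneg_left hA (by linarith : (0:ℝ) ≤ 2 * γ),
    mul_nonneg (mul_nonneg (by linarith : (0:ℝ) ≤ 2 * γ)
      (by nlinarith : (0:ℝ) ≤ 1 - 2 * γ * L))
      (by linarith : (0:ℝ) ≤ F x - F xstar),
    sq_nonneg ‖d‖, hγ0.le]
end

section
/- Iterated SGD contraction: under the conditions of the previous statement, with i.i.d. samples ξ¹,...,ξᴺ and iterates x^{k+1} = x^k - γ∇_x f(x^k,ξ^k), γ ≤ 1/(2L), one has E[‖x^{N+1} - x*‖₂²] ≤ (1-γμ)^N ‖x¹ - x*‖₂² + 2γσ*²/μ. -/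
open MeasureTheory ProbabilityTheory RealInnerProductSpace

open intervalIntegral
abbrev En (n : ℕ) := EuclideanSpace ℝ (Fin n)


lemma sgdA1 {n : ℕ} {g : En n → ℝ} {Gg : En n → En n}
    (hconv : ConvexOn ℝ Set.univ g) (hgrad : ∀ x, HasGradientAt g (Gg x) x)
    (x y : En n) : g x + ⟪Gg x, y - x⟫ ≤ g y := by
  set c : ℝ → En n := fun t => AffineMap.lineMap x y t with hc
  have hcomp : ConvexOn ℝ Set.univ (g ∘ (AffineMap.lineMap x y : ℝ →ᵃ[ℝ] En n)) := by
    simpa using hconv.comp_affineMap (AffineMap.lineMap x y)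
  have hder : ∀ t : ℝ, HasDerivAt (fun s => g (c s)) ⟪Gg (c t), y - x⟫ t := by
    intro t
    have hc' : HasDerivAt c (y - x) t := by
      simp only [hc, AffineMap.coe_lineMap]
      simpa [add_comm] using ((hasDerivAt_id t).smul_const (y - x)).const_add x
    have hg' := (hgrad (c t)).hasFDerivAt
    have := hg'.comp_hasDerivAt t hc'
    simp at this; exact this
  have h01 : (0:ℝ) < 1 := one_pos
  have hd0 := hder 0
  have hc0 : c 0 = x := by simp [hc]
  have hc1 : c 1 = y := by simp [hc]
  rw [hc0] at hd0
  have hslope := hcomp.le_slope_of_hasDerivAt (Set.mem_univ (0:ℝ)) (Set.mem_univ (1:ℝ)) h01 hd0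
  rw [slope_def_field] at hslope
  simp only [Function.comp] at hslope
  have : (AffineMap.lineMap x y : ℝ →ᵃ[ℝ] En n) 1 = y := by simp
  have h0 : (AffineMap.lineMap x y : ℝ →ᵃ[ℝ] En n) 0 = x := by simp
  rw [this, h0] at hslope
  have hinner : (inner ℝ (Gg x) (y - x) : ℝ) = ∑ i, Gg x i * (y i - x i) := by
    simp [PiLp.inner_apply, PiLp.sub_apply, mul_comm]
  rw [hinner]
  linarith

lemma sgdA2 {n : ℕ} {g : En n → ℝ} {Gg : En n → En n} {L : ℝ} (hL : 0 < L)
    (hgrad : ∀ x, HasGradientAt g (Gg x) x)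
    (hlip : ∀ x y, ‖Gg x - Gg y‖ ≤ L * ‖x - y‖)
    (x y : En n) : g y ≤ g x + ⟪Gg x, y - x⟫ + L / 2 * ‖y - x‖ ^ 2 := by
  have hGgcont : Continuous Gg := by
    have : LipschitzWith (Real.toNNReal L) Gg := by
      apply LipschitzWith.of_dist_le_mul
      intro a b
      simpa [dist_eq_norm, Real.coe_toNNReal L hL.le] using hlip a b
    exact this.continuous
  set c : ℝ → En n := fun t => x + t • (y - x) with hc
  have hccont : Continuous c := by continuity
  have hder : ∀ t : ℝ, HasDerivAt (fun s => g (c s)) ⟪Gg (c t), y - x⟫ t := by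
    intro t
    have hc' : HasDerivAt c (y - x) t := by
      simpa [hc] using ((hasDerivAt_id t).smul_const (y - x)).const_add x
    have := (hgrad (c t)).hasFDerivAt.comp_hasDerivAt t hc'
    simp at this; exact this
  have hcont : Continuous fun t => ⟪Gg (c t), y - x⟫ :=
    (hGgcont.comp hccont).inner continuous_const
  have hc0 : c 0 = x := by simp [hc]
  have hc1 : c 1 = y := by simp [hc]
  have hftc0 := integral_eq_sub_of_hasDerivAt (fun t _ => hder t) (hcont.intervalIntegrable 0 1)
  have hftc : ∫ t in (0:ℝ)..1, ⟪Gg (c t), y - x⟫ = g y - g x := by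
    simpa [hc0, hc1] using hftc0
  have hmono : ∫ t in (0:ℝ)..1, ⟪Gg (c t), y - x⟫
      ≤ ∫ t in (0:ℝ)..1, (⟪Gg x, y - x⟫ + (L * ‖y - x‖ ^ 2) * t) := by
    apply integral_mono_on (by norm_num)
    · exact hcont.intervalIntegrable 0 1
    · exact (Continuous.intervalIntegrable (by continuity) 0 1)
    · intro t ht
      have h1 : ⟪Gg (c t), y - x⟫ - ⟪Gg x, y - x⟫ = ⟪Gg (c t) - Gg x, y - x⟫ := by
        rw [inner_sub_left]
      have h2 : ⟪Gg (c t) - Gg x, y - x⟫ ≤ ‖Gg (c t) - Gg x‖ * ‖y - x‖ :=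
        real_inner_le_norm _ _
      have h3 : ‖Gg (c t) - Gg x‖ ≤ L * ‖c t - x‖ := hlip _ _
      have h4 : ‖c t - x‖ = t * ‖y - x‖ := by
        have : c t - x = t • (y - x) := by simp [hc]
        rw [this, norm_smul, Real.norm_eq_abs, abs_of_nonneg ht.1]
      rw [h4] at h3
      have h5 := mul_le_mul_of_nonneg_right h3 (norm_nonneg (y - x))
      have h6 : L * (t * ‖y - x‖) * ‖y - x‖ = L * ‖y - x‖ ^ 2 * t := by
        rw [pow_two]; ring
      linarith
  have hrhs : ∫ t in (0:ℝ)..1, (⟪Gg x, y - x⟫ + (L * ‖y - x‖ ^ 2) * t)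
      = ⟪Gg x, y - x⟫ + L / 2 * ‖y - x‖ ^ 2 := by
    rw [integral_add (intervalIntegrable_const) ((intervalIntegrable_id).const_mul _)]
    rw [intervalIntegral.integral_const_mul]
    simp [integral_id]
    ring
  rw [hftc] at hmono
  rw [hrhs] at hmono
  linarith

lemma sgdA3 {n : ℕ} {g : En n → ℝ} {Gg : En n → En n} {L : ℝ} (hL : 0 < L)
    (hconv : ConvexOn ℝ Set.univ g) (hgrad : ∀ x, HasGradientAt g (Gg x) x)
    (hlip : ∀ x y, ‖Gg x - Gg y‖ ≤ L * ‖x - y‖)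
    (x y : En n) : ‖Gg y - Gg x‖ ^ 2 ≤ 2 * L * (g y - g x - ⟪Gg x, y - x⟫) := by
  set d := Gg y - Gg x with hd
  set z := y - (1 / L) • d with hz
  have h1 : g x + ⟪Gg x, z - x⟫ ≤ g z := sgdA1 hconv hgrad x z
  have h2 : g z ≤ g y + ⟪Gg y, z - y⟫ + L / 2 * ‖z - y‖ ^ 2 := sgdA2 hL hgrad hlip y z
  have hzy : z - y = -((1 / L) • d) := by rw [hz]; abel
  have hin1 : ⟪Gg y, z - y⟫ = -(1 / L) * ⟪Gg y, d⟫ := by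
    rw [hzy, inner_neg_right, inner_smul_right]; ring
  have hnzy : ‖z - y‖ ^ 2 = (1 / L) ^ 2 * ‖d‖ ^ 2 := by
    rw [hzy, norm_neg, norm_smul, mul_pow, Real.norm_eq_abs, sq_abs]
  have hzx : z - x = (y - x) - (1 / L) • d := by rw [hz]; abel
  have hin2 : ⟪Gg x, z - x⟫ = ⟪Gg x, y - x⟫ - (1 / L) * ⟪Gg x, d⟫ := by
    rw [hzx, inner_sub_right, inner_smul_right]
  have hdd : ⟪Gg y, d⟫ - ⟪Gg x, d⟫ = ‖d‖ ^ 2 := by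
    rw [← inner_sub_left, ← hd, real_inner_self_eq_norm_sq]
  have hL' : L ≠ 0 := ne_of_gt hL
  rw [hin1, hnzy] at h2
  rw [hin2] at h1
  have key : (1 / L) * ⟪Gg y, d⟫ - (1 / L) * ⟪Gg x, d⟫ - L / 2 * ((1/L)^2 * ‖d‖^2)
      ≤ g y - g x - ⟪Gg x, y - x⟫ := by linarith
  have : (1 / L) * ‖d‖ ^ 2 - L / 2 * ((1/L)^2 * ‖d‖^2) = ‖d‖ ^ 2 / (2 * L) := by
    field_simp; ring
  rw [← mul_sub, hdd] at key
  rw [this] at key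
  calc ‖d‖ ^ 2 = 2 * L * (‖d‖ ^ 2 / (2 * L)) := by field_simp
    _ ≤ 2 * L * (g y - g x - ⟪Gg x, y - x⟫) := by
        apply mul_le_mul_of_nonneg_left key (by positivity)

lemma sgdStep {n : ℕ} {Ξ : Type*} [MeasurableSpace Ξ]
    (ν : Measure Ξ) [IsProbabilityMeasure ν]
    (f : En n → Ξ → ℝ) (G : En n → Ξ → En n)
    (L μ : ℝ) (hL : 0 < L) (hμ : 0 < μ)
    (hconv : ∀ ξ, ConvexOn ℝ Set.univ (fun x => f x ξ))
    (hgrad : ∀ ξ x, HasGradientAt (fun y => f y ξ) (G x ξ) x)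
    (hlip : ∀ ξ x y, ‖G x ξ - G y ξ‖ ≤ L * ‖x - y‖)
    (F : En n → ℝ) (hF : ∀ x, F x = ∫ ξ, f x ξ ∂ν)
    (hfint : ∀ x, Integrable (fun ξ => f x ξ) ν)
    (hGint : ∀ x, Integrable (fun ξ => G x ξ) ν)
    (hGsqint : ∀ x, Integrable (fun ξ => ‖G x ξ‖ ^ 2) ν)
    (xstar : En n) (hmin : ∫ ξ, G xstar ξ ∂ν = 0)
    (hsc : ∀ x, F xstar ≥ F x + ⟪∫ ξ, G x ξ ∂ν, xstar - x⟫ + μ / 2 * ‖xstar - x‖ ^ 2)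
    (σstar2 : ℝ) (hσ : σstar2 = ∫ ξ, ‖G xstar ξ‖ ^ 2 ∂ν)
    (γ : ℝ) (hγ0 : 0 < γ) (hγ : γ ≤ 1 / (2 * L)) (w : En n) :
    ∫ ξ, ‖w - γ • G w ξ - xstar‖ ^ 2 ∂ν
      ≤ (1 - γ * μ) * ‖w - xstar‖ ^ 2 + 2 * γ ^ 2 * σstar2 := by
  have hinner_int : ∀ v : En n, ∀ c : En n,
      Integrable (fun ξ => ⟪G v ξ, c⟫) ν := fun v c => (hGint v).inner_const c
  have hinner_eq : ∀ v : En n, ∀ c : En n,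
      ∫ ξ, ⟪G v ξ, c⟫ ∂ν = ⟪∫ ξ, G v ξ ∂ν, c⟫ := by
    intro v c
    have h1 : ∀ ξ, ⟪G v ξ, c⟫ = ⟪c, G v ξ⟫ := fun ξ => real_inner_comm _ _
    simp_rw [h1]
    rw [integral_inner (hGint v) c]
    exact real_inner_comm _ _
  -- F w ≥ F xstar
  have hFge : F xstar ≤ F w := by
    have hpt : ∀ ξ, f xstar ξ + ⟪G xstar ξ, w - xstar⟫ ≤ f w ξ := fun ξ =>
      sgdA1 (hconv ξ) (fun x => hgrad ξ x) xstar w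
    have hint1 : Integrable (fun ξ => f xstar ξ + ⟪G xstar ξ, w - xstar⟫) ν :=
      (hfint xstar).add (hinner_int xstar _)
    have := integral_mono hint1 (hfint w) hpt
    rw [integral_add (hfint xstar) (hinner_int xstar _), hinner_eq, hmin] at this
    simp at this
    rw [hF xstar, hF w]; linarith
  -- strong convexity rearranged
  have hsc' : F w - F xstar + μ / 2 * ‖w - xstar‖ ^ 2 ≤ ⟪∫ ξ, G w ξ ∂ν, w - xstar⟫ := by
    have h := hsc w
    have h1 : ⟪∫ ξ, G w ξ ∂ν, xstar - w⟫ = -⟪∫ ξ, G w ξ ∂ν, w - xstar⟫ := by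
      rw [show xstar - w = -(w - xstar) by abel, inner_neg_right]
    rw [h1, norm_sub_rev] at h
    linarith
  -- second moment bound
  have hsq : ∫ ξ, ‖G w ξ‖ ^ 2 ∂ν ≤ 4 * L * (F w - F xstar) + 2 * σstar2 := by
    have hpt : ∀ ξ, ‖G w ξ‖ ^ 2
        ≤ 4 * L * (f w ξ - f xstar ξ - ⟪G xstar ξ, w - xstar⟫) + 2 * ‖G xstar ξ‖ ^ 2 := by
      intro ξ
      have h3 := sgdA3 hL (hconv ξ) (fun x => hgrad ξ x) (fun x y => hlip ξ x y) xstar w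
      have htri : ‖G w ξ‖ ≤ ‖G w ξ - G xstar ξ‖ + ‖G xstar ξ‖ := by
        simpa using norm_add_le (G w ξ - G xstar ξ) (G xstar ξ)
      nlinarith [h3, htri, sq_nonneg (‖G w ξ - G xstar ξ‖ - ‖G xstar ξ‖),
        norm_nonneg (G w ξ), norm_nonneg (G w ξ - G xstar ξ), norm_nonneg (G xstar ξ)]
    have hint2 : Integrable
        (fun ξ => 4 * L * (f w ξ - f xstar ξ - ⟪G xstar ξ, w - xstar⟫) + 2 * ‖G xstar ξ‖ ^ 2) ν :=
      ((((hfint w).sub (hfint xstar)).sub (hinner_int xstar _)).const_mul _).add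
        ((hGsqint xstar).const_mul _)
    have := integral_mono (hGsqint w) hint2 hpt
    have j1 : Integrable (fun ξ => 4 * L * (f w ξ - f xstar ξ - ⟪G xstar ξ, w - xstar⟫)) ν :=
      (((hfint w).sub (hfint xstar)).sub (hinner_int xstar _)).const_mul _
    have j2 : Integrable (fun ξ => 2 * ‖G xstar ξ‖ ^ 2) ν := (hGsqint xstar).const_mul _
    have j3 : Integrable (fun ξ => f w ξ - f xstar ξ) ν := (hfint w).sub (hfint xstar)
    rw [integral_add j1 j2, MeasureTheory.integral_const_mul, MeasureTheory.integral_const_mul,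
      integral_sub j3 (hinner_int xstar _),
      integral_sub (hfint w) (hfint xstar), hinner_eq, hmin] at this
    simp only [inner_zero_left] at this
    rw [hF w, hF xstar, hσ]
    simpa using this
  -- expand the square and combine
  have hexp : ∀ ξ, ‖w - γ • G w ξ - xstar‖ ^ 2
      = ‖w - xstar‖ ^ 2 - 2 * γ * ⟪G w ξ, w - xstar⟫ + γ ^ 2 * ‖G w ξ‖ ^ 2 := by
    intro ξ
    have h0 : w - γ • G w ξ - xstar = (w - xstar) - γ • G w ξ := by abel
    rw [h0, norm_sub_sq_real, inner_smul_right, norm_smul, Real.norm_eq_abs, mul_pow, sq_abs,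
      real_inner_comm]
    ring
  have hIeq : ∫ ξ, ‖w - γ • G w ξ - xstar‖ ^ 2 ∂ν
      = ‖w - xstar‖ ^ 2 - 2 * γ * (∫ ξ, ⟪G w ξ, w - xstar⟫ ∂ν)
        + γ ^ 2 * (∫ ξ, ‖G w ξ‖ ^ 2 ∂ν) := by
    simp_rw [hexp]
    have i1 : Integrable (fun ξ => 2 * γ * ⟪G w ξ, w - xstar⟫) ν :=
      (hinner_int w _).const_mul _
    have i2 : Integrable (fun ξ => γ ^ 2 * ‖G w ξ‖ ^ 2) ν := (hGsqint w).const_mul _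
    have i3 : Integrable (fun ξ => ‖w - xstar‖ ^ 2 - 2 * γ * ⟪G w ξ, w - xstar⟫) ν :=
      (integrable_const _).sub i1
    rw [integral_add i3 i2, integral_sub (integrable_const _) i1,
      MeasureTheory.integral_const_mul, MeasureTheory.integral_const_mul, MeasureTheory.integral_const]
    simp
  rw [hIeq, hinner_eq]
  have h2L : 2 * γ * L ≤ 1 := by
    rw [div_eq_inv_mul] at hγ
    calc 2 * γ * L = γ * (2 * L) := by ring
      _ ≤ (2 * L)⁻¹ * (2 * L) := by
          apply mul_le_mul_of_nonneg_right (by simpa using hγ) (by positivity)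
      _ = 1 := by field_simp
  have hkey : 0 ≤ (2 * γ - 4 * γ ^ 2 * L) * (F w - F xstar) := by
    apply mul_nonneg _ (by linarith)
    nlinarith
  nlinarith [hkey, mul_le_mul_of_nonneg_left hsq (sq_nonneg γ),
    mul_le_mul_of_nonneg_left hsc' (by positivity : (0:ℝ) ≤ 2 * γ)]


lemma existsG2 {n : ℕ} {Ξ : Type*} [MeasurableSpace Ξ] (ν : Measure Ξ)
    (G : En n → Ξ → En n) (L : ℝ) (hL : 0 ≤ L)
    (hlip : ∀ ξ x y, ‖G x ξ - G y ξ‖ ≤ L * ‖x - y‖)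
    (hGae : ∀ x, AEStronglyMeasurable (fun ξ => G x ξ) ν) :
    ∃ (G2 : En n × Ξ → En n) (Sset : Set Ξ), MeasurableSet Sset ∧ ν Ssetᶜ = 0 ∧
      StronglyMeasurable G2 ∧ (∀ x ξ, ξ ∈ Sset → G2 (x, ξ) = G x ξ) := by
  classical
  obtain ⟨D, hD⟩ := TopologicalSpace.exists_dense_seq (En n)
  set g : ℕ → Ξ → En n := fun i => (hGae (D i)).mk _ with hg
  have hgsm : ∀ i, StronglyMeasurable (g i) := fun i => (hGae (D i)).stronglyMeasurable_mk
  have hgae : ∀ i, (fun ξ => G (D i) ξ) =ᵐ[ν] g i := fun i => (hGae (D i)).ae_eq_mk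
  have hnull : ∀ i, ν {ξ | G (D i) ξ ≠ g i ξ} = 0 := fun i => by
    simpa [Filter.EventuallyEq, ae_iff] using hgae i
  choose t htsup htmeas htnull using fun i =>
    exists_measurable_superset_of_null (hnull i)
  set Sset : Set Ξ := (⋃ i, t i)ᶜ with hSset
  have hSmeas : MeasurableSet Sset := (MeasurableSet.iUnion htmeas).compl
  have hScompl : ν Ssetᶜ = 0 := by
    rw [hSset, compl_compl]
    exact measure_iUnion_null htnull
  have hgood : ∀ ξ ∈ Sset, ∀ i, G (D i) ξ = g i ξ := by
    intro ξ hξ i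
    by_contra hne
    exact hξ (Set.mem_iUnion.2 ⟨i, htsup i hne⟩)
  -- index selection
  have hfind : ∀ (m : ℕ) (q : En n × Ξ), ∃ i, dist (D i) q.1 < 1 / (m + 1) := by
    intro m q
    obtain ⟨i, hi⟩ := hD.exists_dist_lt q.1 (by positivity : (0:ℝ) < 1 / (m + 1))
    exact ⟨i, by rwa [dist_comm]⟩
  set u : ℕ → En n × Ξ → En n := fun m p =>
    (fun i (q : En n × Ξ) => if q.2 ∈ Sset then g i q.2 else 0)
      (Nat.find (hfind m p)) p with hu
  have humeas : ∀ m, Measurable (u m) := by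
    intro m
    exact Measurable.find
      (fun i => Measurable.ite (hSmeas.preimage measurable_snd)
        ((hgsm i).measurable.comp measurable_snd) measurable_const)
      (fun i => measurableSet_lt
        (((continuous_const.dist continuous_id).measurable).comp measurable_fst)
        measurable_const)
      (hfind m)
  set G2 : En n × Ξ → En n := fun p => if p.2 ∈ Sset then G p.1 p.2 else 0 with hG2
  have htend : ∀ p : En n × Ξ, Filter.Tendsto (fun m => u m p) Filter.atTop (nhds (G2 p)) := by
    intro p
    by_cases hp : p.2 ∈ Sset
    · have heq : ∀ m, u m p = G (D (Nat.find (hfind m p))) p.2 := by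
        intro m
        simp only [hu, if_pos hp]
        exact (hgood p.2 hp _).symm
      have hdist : ∀ m : ℕ, dist (u m p) (G2 p) ≤ L * (1 / (m + 1)) := by
        intro m
        rw [heq m]
        simp only [hG2, if_pos hp]
        rw [dist_eq_norm]
        calc ‖G (D (Nat.find (hfind m p))) p.2 - G p.1 p.2‖
            ≤ L * ‖D (Nat.find (hfind m p)) - p.1‖ := hlip _ _ _
          _ ≤ L * (1 / (m + 1)) := by
              apply mul_le_mul_of_nonneg_left _ hL
              rw [← dist_eq_norm]
              exact (Nat.find_spec (hfind m p)).le
      have hlim : Filter.Tendsto (fun m : ℕ => L * (1 / (m + 1) : ℝ)) Filter.atTop (nhds 0) := by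
        rw [show (0:ℝ) = L * 0 by ring]
        exact (tendsto_one_div_add_atTop_nhds_zero_nat).const_mul L
      rw [tendsto_iff_dist_tendsto_zero]
      exact squeeze_zero (fun m => dist_nonneg) hdist hlim
    · have heq : ∀ m, u m p = 0 := by intro m; simp only [hu, hp, if_neg, if_false]
      have : G2 p = 0 := by simp only [hG2, hp, if_neg, if_false]
      rw [this]
      simp_rw [heq]
      exact tendsto_const_nhds
  have hG2sm : StronglyMeasurable G2 :=
    stronglyMeasurable_of_tendsto Filter.atTop (fun m => (humeas m).stronglyMeasurable)
      (tendsto_pi_nhds.mpr htend)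
  exact ⟨G2, Sset, hSmeas, hScompl, hG2sm, fun x ξ hξ => by simp [hG2, hξ]⟩

set_option maxHeartbeats 1000000 in
/-- Iterated SGD contraction: with i.i.d. samples and `γ ≤ 1/(2L)`,
`E‖x^{N+1} - x*‖² ≤ (1-γμ)^N ‖x¹ - x*‖² + 2γσ*²/μ`. -/
theorem sgd_iterated_contraction
    {n : ℕ} {Ξ : Type*} [MeasurableSpace Ξ]
    {Ω : Type*} [MeasurableSpace Ω] (P : Measure Ω) [IsProbabilityMeasure P]
    (ν : Measure Ξ) [IsProbabilityMeasure ν]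
    (f : EuclideanSpace ℝ (Fin n) → Ξ → ℝ)
    (G : EuclideanSpace ℝ (Fin n) → Ξ → EuclideanSpace ℝ (Fin n))
    (L μ : ℝ) (hL : 0 < L) (hμ : 0 < μ)
    (hconv : ∀ ξ, ConvexOn ℝ Set.univ (fun x => f x ξ))
    (hgrad : ∀ ξ x, HasGradientAt (fun y => f y ξ) (G x ξ) x)
    (hlip : ∀ ξ x y, ‖G x ξ - G y ξ‖ ≤ L * ‖x - y‖)
    (F : EuclideanSpace ℝ (Fin n) → ℝ) (hF : ∀ x, F x = ∫ ξ, f x ξ ∂ν)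
    (hfint : ∀ x, Integrable (fun ξ => f x ξ) ν)
    (hGint : ∀ x, Integrable (fun ξ => G x ξ) ν)
    (hGsqint : ∀ x, Integrable (fun ξ => ‖G x ξ‖ ^ 2) ν)
    (xstar : EuclideanSpace ℝ (Fin n)) (hmin : ∫ ξ, G xstar ξ ∂ν = 0)
    (hsc : ∀ x, F xstar ≥ F x + ⟪∫ ξ, G x ξ ∂ν, xstar - x⟫ + μ / 2 * ‖xstar - x‖ ^ 2)
    (σstar2 : ℝ) (hσ : σstar2 = ∫ ξ, ‖G xstar ξ‖ ^ 2 ∂ν)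
    (γ : ℝ) (hγ0 : 0 < γ) (hγ : γ ≤ 1 / (2 * L))
    (ξs : ℕ → Ω → Ξ) (hmeas : ∀ k, Measurable (ξs k))
    (hindep : iIndepFun ξs P)
    (hdist : ∀ k, P.map (ξs k) = ν)
    (N : ℕ) (hN : 0 < N)
    (x : ℕ → Ω → EuclideanSpace ℝ (Fin n)) (x1 : EuclideanSpace ℝ (Fin n))
    (hx1 : ∀ ω, x 1 ω = x1)
    (hiter : ∀ k ≥ 1, ∀ ω, x (k + 1) ω = x k ω - γ • G (x k ω) (ξs k ω)) :
    (∫ ω, ‖x (N + 1) ω - xstar‖ ^ 2 ∂P)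
      ≤ (1 - γ * μ) ^ N * ‖x1 - xstar‖ ^ 2 + 2 * γ * σstar2 / μ := by
  classical
  have hσ0 : 0 ≤ σstar2 := by
    rw [hσ]; exact integral_nonneg fun ξ => by positivity
  rcases Nat.eq_zero_or_pos n with hn0 | hn
  · -- degenerate dimension-zero case
    subst hn0
    have hsub : ∀ v w : En 0, v = w := fun v w => Subsingleton.elim v w
    have h1 : ∀ ω, ‖x (N + 1) ω - xstar‖ ^ 2 = (0:ℝ) := by
      intro ω; rw [hsub (x (N + 1) ω) xstar]; simp
    have hσz : σstar2 = 0 := by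
      rw [hσ]
      have : ∀ ξ, ‖G xstar ξ‖ ^ 2 = (0:ℝ) := fun ξ => by rw [hsub (G xstar ξ) 0]; simp
      simp [this]
    have hx10 : ‖x1 - xstar‖ ^ 2 = (0:ℝ) := by rw [hsub x1 xstar]; simp
    simp [h1, hσz, hx10]
  -- main case
  -- μ ≤ 2L hence 0 ≤ 1 - γμ
  have hinner_int : ∀ v c : En n, Integrable (fun ξ => ⟪G v ξ, c⟫) ν :=
    fun v c => (hGint v).inner_const c
  have hinner_eq : ∀ v c : En n, ∫ ξ, ⟪G v ξ, c⟫ ∂ν = ⟪∫ ξ, G v ξ ∂ν, c⟫ := by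
    intro v c
    have h1 : ∀ ξ, ⟪G v ξ, c⟫ = ⟪c, G v ξ⟫ := fun ξ => real_inner_comm _ _
    simp_rw [h1]
    rw [integral_inner (hGint v) c]
    exact real_inner_comm _ _
  have hFge : ∀ w, F xstar ≤ F w := by
    intro w
    have hpt : ∀ ξ, f xstar ξ + ⟪G xstar ξ, w - xstar⟫ ≤ f w ξ := fun ξ =>
      sgdA1 (hconv ξ) (fun z => hgrad ξ z) xstar w
    have hint1 : Integrable (fun ξ => f xstar ξ + ⟪G xstar ξ, w - xstar⟫) ν :=
      (hfint xstar).add (hinner_int xstar _)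
    have h := integral_mono hint1 (hfint w) hpt
    rw [integral_add (hfint xstar) (hinner_int xstar _), hinner_eq, hmin] at h
    simp at h
    rw [hF xstar, hF w]; linarith
  have hμ2L : μ ≤ 2 * L := by
    set w : En n := xstar + EuclideanSpace.single ⟨0, hn⟩ (1:ℝ) with hw
    have hwnorm : ‖w - xstar‖ = 1 := by
      rw [hw]
      simp [EuclideanSpace.norm_single]
    have h1 := hsc w
    have h2 : ⟪∫ ξ, G w ξ ∂ν, xstar - w⟫ = -⟪∫ ξ, G w ξ ∂ν, w - xstar⟫ := by
      rw [show xstar - w = -(w - xstar) by abel, inner_neg_right]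
    rw [h2, norm_sub_rev, hwnorm] at h1
    have h3 : ⟪∫ ξ, G w ξ ∂ν, w - xstar⟫ ≤ ‖∫ ξ, G w ξ ∂ν‖ := by
      calc ⟪∫ ξ, G w ξ ∂ν, w - xstar⟫ ≤ ‖∫ ξ, G w ξ ∂ν‖ * ‖w - xstar‖ :=
        real_inner_le_norm _ _
        _ = ‖∫ ξ, G w ξ ∂ν‖ := by rw [hwnorm, mul_one]
    have h4 : ‖∫ ξ, G w ξ ∂ν‖ ≤ L := by
      have he : ∫ ξ, G w ξ ∂ν = ∫ ξ, (G w ξ - G xstar ξ) ∂ν := by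
        rw [integral_sub (hGint w) (hGint xstar), hmin, sub_zero]
      rw [he]
      calc ‖∫ ξ, (G w ξ - G xstar ξ) ∂ν‖ ≤ ∫ ξ, ‖G w ξ - G xstar ξ‖ ∂ν :=
            norm_integral_le_integral_norm _
        _ ≤ ∫ ξ, L * ‖w - xstar‖ ∂ν := by
            apply integral_mono ((hGint w).sub (hGint xstar)).norm (integrable_const _)
            intro ξ; exact hlip ξ w xstar
        _ = L := by rw [MeasureTheory.integral_const]; simp [hwnorm]
    have h5 := hFge w
    nlinarith
  have h2L : 2 * γ * L ≤ 1 := by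
    rw [div_eq_inv_mul] at hγ
    calc 2 * γ * L = γ * (2 * L) := by ring
      _ ≤ (2 * L)⁻¹ * (2 * L) := mul_le_mul_of_nonneg_right (by simpa using hγ) (by positivity)
      _ = 1 := by field_simp
  have hr0 : 0 ≤ 1 - γ * μ := by nlinarith
  have hr1 : 1 - γ * μ < 1 := by nlinarith
  -- jointly measurable modification of G
  obtain ⟨G2, Sset, hSmeas, hSnull, hG2sm, hG2eq⟩ :=
    existsG2 ν G L hL.le hlip (fun z => (hGint z).1)
  have hG2meas : Measurable G2 := hG2sm.measurable
  have hneΞ : Nonempty Ξ := by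
    by_contra h
    rw [not_nonempty_iff] at h
    have : ν Set.univ = 1 := measure_univ
    rw [Set.univ_eq_empty_iff.2 h] at this
    simp at this
  obtain ⟨ξ0⟩ := hneΞ
  have hSae : ∀ᵐ ξ ∂ν, ξ ∈ Sset := by
    rw [ae_iff]
    exact hSnull
  -- deterministic recursion
  set Φ : ℕ → (ℕ → Ξ) → En n := fun k =>
    Nat.rec (motive := fun _ => (ℕ → Ξ) → En n) (fun _ => x1)
      (fun k Φk u => Φk u - γ • G2 (Φk u, u (k + 1))) k with hΦdef
  have hΦ0 : ∀ u, Φ 0 u = x1 := fun _ => rfl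
  have hΦs : ∀ k u, Φ (k + 1) u = Φ k u - γ • G2 (Φ k u, u (k + 1)) := fun _ _ => rfl
  have hΦmeas : ∀ k, Measurable (Φ k) := by
    intro k
    induction k with
    | zero => exact measurable_const
    | succ k ih =>
      have : Measurable fun u : ℕ → Ξ => G2 (Φ k u, u (k + 1)) :=
        hG2meas.comp (ih.prodMk (measurable_pi_apply (k + 1)))
      have e : Φ (k + 1) = Φ k - γ • fun u => G2 (Φ k u, u (k + 1)) := funext (hΦs k)
      rw [e]; exact ih.sub (this.const_smul γ)
  have hΦdep : ∀ k (u v : ℕ → Ξ), (∀ i, 1 ≤ i → i ≤ k → u i = v i) → Φ k u = Φ k v := by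
    intro k
    induction k with
    | zero => intro u v _; rfl
    | succ k ih =>
      intro u v h
      rw [hΦs, hΦs, ih u v (fun i h1 h2 => h i h1 (h2.trans (Nat.le_succ k))),
        h (k + 1) (Nat.succ_le_succ (Nat.zero_le k)) le_rfl]
  have hrep : ∀ k ω, (∀ i, 1 ≤ i → i ≤ k → ξs i ω ∈ Sset) →
      x (k + 1) ω = Φ k (fun i => ξs i ω) := by
    intro k
    induction k with
    | zero => intro ω _; rw [hx1, hΦ0]
    | succ k ih =>
      intro ω h
      have h1 : x (k + 1 + 1) ω = x (k + 1) ω - γ • G (x (k + 1) ω) (ξs (k + 1) ω) :=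
        hiter (k + 1) (Nat.succ_le_succ (Nat.zero_le k)) ω
      have h2 := ih ω (fun i hi1 hi2 => h i hi1 (hi2.trans (Nat.le_succ k)))
      have h3 : ξs (k + 1) ω ∈ Sset := h (k + 1) (Nat.succ_le_succ (Nat.zero_le k)) le_rfl
      rw [h1, h2, hΦs, hG2eq _ _ h3]
  have hgoodae : ∀ k : ℕ, ∀ᵐ ω ∂P, ∀ i, 1 ≤ i → i ≤ k → ξs i ω ∈ Sset := by
    intro k
    rw [ae_all_iff]
    intro i
    by_cases h1 : 1 ≤ i
    · by_cases h2 : i ≤ k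
      · have : P ((ξs i) ⁻¹' Ssetᶜ) = 0 := by
          have hm := Measure.map_apply (hmeas i) hSmeas.compl (f := ξs i) (μ := P)
          rw [hdist i] at hm
          rw [← hm]
          exact hSnull
        filter_upwards [measure_eq_zero_iff_ae_notMem.mp this] with ω hω
        intro _ _
        simpa using hω
      · filter_upwards with ω h1' h2'; exact absurd h2' h2
    · filter_upwards with ω h1'; exact absurd h1' h1
  -- the key one-step bound over Ω
  have hstep : ∀ k, Integrable (fun ω => ‖x (k + 1) ω - xstar‖ ^ 2) P →
      Integrable (fun ω => ‖x (k + 2) ω - xstar‖ ^ 2) P ∧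
      ∫ ω, ‖x (k + 2) ω - xstar‖ ^ 2 ∂P
        ≤ (1 - γ * μ) * ∫ ω, ‖x (k + 1) ω - xstar‖ ^ 2 ∂P + 2 * γ ^ 2 * σstar2 := by
    intro k hYk
    set S1 : Finset ℕ := Finset.Icc 1 k with hS1
    have hmem : (k + 1) ∉ S1 := by simp [hS1]
    set W : (S1 → Ξ) → En n :=
      fun v => Φ k (fun i => if h : i ∈ S1 then v ⟨i, h⟩ else ξ0) with hW
    have hWmeas : Measurable W := by
      apply (hΦmeas k).comp
      apply measurable_pi_lambda
      intro i
      by_cases h : i ∈ S1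
      · simp only [dif_pos h]; exact measurable_pi_apply _
      · simp only [dif_neg h]; exact measurable_const
    set Z : Ω → En n := fun ω => W (fun i : S1 => ξs i ω) with hZ
    have hZmeas : Measurable Z := hWmeas.comp (measurable_pi_lambda _ fun i => hmeas i)
    have hZeq : ∀ ω, Φ k (fun i => ξs i ω) = Z ω := by
      intro ω
      apply hΦdep
      intro i h1 h2
      have : i ∈ S1 := by simp [hS1, h1, h2]
      simp [hW, this]
    have hZae : (fun ω => x (k + 1) ω) =ᵐ[P] Z := by
      filter_upwards [hgoodae k] with ω h
      rw [hrep k ω h, hZeq ω]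
    have hIndep : IndepFun Z (ξs (k + 1)) P := by
      have h0 := hindep.indepFun_finset S1 {k + 1}
        (by simp [hS1, Finset.disjoint_singleton_right]) hmeas
      have h1 := h0.comp hWmeas
        (measurable_pi_apply (⟨k + 1, Finset.mem_singleton_self _⟩ : ({k+1} : Finset ℕ)))
      exact h1
    have hmap : P.map (fun ω => (Z ω, ξs (k + 1) ω)) = (P.map Z).prod ν := by
      rw [← hdist (k + 1)]
      exact (indepFun_iff_map_prod_eq_prod_map_map hZmeas.aemeasurable
        (hmeas (k + 1)).aemeasurable).mp hIndep
    haveI : IsProbabilityMeasure (P.map Z) := Measure.isProbabilityMeasure_map hZmeas.aemeasurable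
    set g2 : En n × Ξ → ℝ := fun p => ‖p.1 - γ • G2 p - xstar‖ ^ 2 with hg2
    have hg2meas : Measurable g2 := by
      apply Measurable.pow_const
      exact ((measurable_fst.sub (hG2meas.const_smul γ)).sub measurable_const).norm
    have hpairmeas : Measurable fun ω => (Z ω, ξs (k + 1) ω) :=
      hZmeas.prodMk (hmeas (k + 1))
    have hYeq : (fun ω => ‖x (k + 2) ω - xstar‖ ^ 2) =ᵐ[P]
        fun ω => g2 (Z ω, ξs (k + 1) ω) := by
      filter_upwards [hgoodae (k + 1)] with ω h
      have h1 : x (k + 2) ω = x (k + 1) ω - γ • G (x (k + 1) ω) (ξs (k + 1) ω) :=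
        hiter (k + 1) (Nat.succ_le_succ (Nat.zero_le k)) ω
      have h2 : x (k + 1) ω = Z ω := by
        rw [hrep k ω (fun i hi1 hi2 => h i hi1 (hi2.trans (Nat.le_succ k))), hZeq ω]
      have h3 : ξs (k + 1) ω ∈ Sset := h (k + 1) (Nat.succ_le_succ (Nat.zero_le k)) le_rfl
      rw [h1, h2, hg2]
      simp only
      rw [hG2eq _ _ h3]
    -- integrability of the next iterate
    have hZsq : Integrable (fun ω => ‖Z ω - xstar‖ ^ 2) P := by
      apply hYk.congr
      filter_upwards [hZae] with ω h
      rw [h]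
    have hGstar : Integrable (fun ω => ‖G2 (xstar, ξs (k + 1) ω)‖ ^ 2) P := by
      have hν : Integrable (fun ξ => ‖G2 (xstar, ξ)‖ ^ 2) ν := by
        apply (hGsqint xstar).congr
        filter_upwards [hSae] with ξ hξ
        rw [hG2eq _ _ hξ]
      have hmg : Measurable fun ξ : Ξ => ‖G2 (xstar, ξ)‖ ^ 2 :=
        (hG2meas.comp measurable_prodMk_left).norm.pow_const 2
      have hiff := integrable_map_measure (f := ξs (k + 1)) (μ := P)
        (hmg.aestronglyMeasurable) (hmeas (k + 1)).aemeasurable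
      rw [hdist (k + 1)] at hiff
      exact hiff.mp hν
    have hYk1 : Integrable (fun ω => ‖x (k + 2) ω - xstar‖ ^ 2) P := by
      apply Integrable.mono'
        ((hZsq.const_mul (2 * (1 + γ * L) ^ 2)).add (hGstar.const_mul (2 * γ ^ 2)))
        (((hg2meas.comp hpairmeas).aestronglyMeasurable).congr hYeq.symm)
      filter_upwards [hYeq, hgoodae (k + 1)] with ω heq h
      simp only [Pi.add_apply]
      rw [heq]
      have h3 : ξs (k + 1) ω ∈ Sset := h (k + 1) (Nat.succ_le_succ (Nat.zero_le k)) le_rfl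
      simp only [hg2]
      rw [hG2eq _ _ h3]
      rw [Real.norm_eq_abs, abs_of_nonneg (by positivity)]
      have hb : ‖G (Z ω) (ξs (k + 1) ω)‖
          ≤ L * ‖Z ω - xstar‖ + ‖G2 (xstar, ξs (k + 1) ω)‖ := by
        rw [hG2eq _ _ h3]
        calc ‖G (Z ω) (ξs (k + 1) ω)‖
            = ‖(G (Z ω) (ξs (k + 1) ω) - G xstar (ξs (k + 1) ω)) + G xstar (ξs (k + 1) ω)‖ := by
              rw [sub_add_cancel]
          _ ≤ ‖G (Z ω) (ξs (k + 1) ω) - G xstar (ξs (k + 1) ω)‖ + ‖G xstar (ξs (k + 1) ω)‖ :=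
              norm_add_le _ _
          _ ≤ L * ‖Z ω - xstar‖ + ‖G xstar (ξs (k + 1) ω)‖ := by
              have := hlip (ξs (k + 1) ω) (Z ω) xstar; linarith
      have htri : ‖Z ω - γ • G (Z ω) (ξs (k + 1) ω) - xstar‖
          ≤ ‖Z ω - xstar‖ + γ * ‖G (Z ω) (ξs (k + 1) ω)‖ := by
        calc ‖Z ω - γ • G (Z ω) (ξs (k + 1) ω) - xstar‖
            = ‖(Z ω - xstar) - γ • G (Z ω) (ξs (k + 1) ω)‖ := by rw [sub_right_comm]
          _ ≤ ‖Z ω - xstar‖ + ‖γ • G (Z ω) (ξs (k + 1) ω)‖ := norm_sub_le _ _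
          _ = ‖Z ω - xstar‖ + γ * ‖G (Z ω) (ξs (k + 1) ω)‖ := by
              rw [norm_smul, Real.norm_eq_abs, abs_of_nonneg hγ0.le]
      have h7 : ‖Z ω - γ • G (Z ω) (ξs (k + 1) ω) - xstar‖
          ≤ (1 + γ * L) * ‖Z ω - xstar‖ + γ * ‖G2 (xstar, ξs (k + 1) ω)‖ := by
        have := mul_le_mul_of_nonneg_left hb hγ0.le
        nlinarith
      have h8 : (0:ℝ) ≤ (1 + γ * L) * ‖Z ω - xstar‖ + γ * ‖G2 (xstar, ξs (k + 1) ω)‖ :=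
        le_trans (norm_nonneg _) h7
      have h9 := mul_le_mul h7 h7 (norm_nonneg _) h8
      nlinarith [h9, sq_nonneg ((1 + γ * L) * ‖Z ω - xstar‖ - γ * ‖G2 (xstar, ξs (k + 1) ω)‖)]
    -- Fubini
    have hintprod : Integrable g2 ((P.map Z).prod ν) := by
      rw [← hmap]
      exact (integrable_map_measure hg2meas.aestronglyMeasurable
        hpairmeas.aemeasurable).mpr (hYk1.congr hYeq)
    have heq1 : ∫ ω, ‖x (k + 2) ω - xstar‖ ^ 2 ∂P = ∫ p, g2 p ∂((P.map Z).prod ν) := by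
      rw [integral_congr_ae hYeq, ← hmap,
        integral_map hpairmeas.aemeasurable hg2meas.aestronglyMeasurable]
    have heq2 : ∫ p, g2 p ∂((P.map Z).prod ν)
        = ∫ w, (∫ ξ, g2 (w, ξ) ∂ν) ∂(P.map Z) := integral_prod _ hintprod
    have hinnerle : ∀ w : En n, ∫ ξ, g2 (w, ξ) ∂ν
        ≤ (1 - γ * μ) * ‖w - xstar‖ ^ 2 + 2 * γ ^ 2 * σstar2 := by
      intro w
      have hcongr : (fun ξ => g2 (w, ξ)) =ᵐ[ν] fun ξ => ‖w - γ • G w ξ - xstar‖ ^ 2 := by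
        filter_upwards [hSae] with ξ hξ
        simp only [hg2]
        rw [hG2eq _ _ hξ]
      rw [integral_congr_ae hcongr]
      exact sgdStep ν f G L μ hL hμ hconv hgrad hlip F hF hfint hGint hGsqint
        xstar hmin hsc σstar2 hσ γ hγ0 hγ w
    have hZsq' : Integrable (fun w : En n => ‖w - xstar‖ ^ 2) (P.map Z) := by
      apply (integrable_map_measure ?_ hZmeas.aemeasurable).mpr
      · exact hZsq
      · exact ((measurable_id.sub measurable_const).norm.pow_const 2).aestronglyMeasurable
    have houter : ∫ w, (∫ ξ, g2 (w, ξ) ∂ν) ∂(P.map Z)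
        ≤ ∫ w, ((1 - γ * μ) * ‖w - xstar‖ ^ 2 + 2 * γ ^ 2 * σstar2) ∂(P.map Z) := by
      apply integral_mono_of_nonneg
      · filter_upwards with w
        exact integral_nonneg fun ξ => by positivity
      · exact (hZsq'.const_mul _).add (integrable_const _)
      · filter_upwards with w
        exact hinnerle w
    have heval : ∫ w, ((1 - γ * μ) * ‖w - xstar‖ ^ 2 + 2 * γ ^ 2 * σstar2) ∂(P.map Z)
        = (1 - γ * μ) * ∫ ω, ‖x (k + 1) ω - xstar‖ ^ 2 ∂P + 2 * γ ^ 2 * σstar2 := by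
      rw [integral_add (hZsq'.const_mul _) (integrable_const _), MeasureTheory.integral_const_mul,
        MeasureTheory.integral_const]
      have hgm : AEStronglyMeasurable (fun w : En n => ‖w - xstar‖ ^ 2) (P.map Z) :=
        ((measurable_id.sub measurable_const).norm.pow_const 2).aestronglyMeasurable
      have hZback : ∫ w, ‖w - xstar‖ ^ 2 ∂(P.map Z) = ∫ ω, ‖x (k + 1) ω - xstar‖ ^ 2 ∂P := by
        rw [integral_map hZmeas.aemeasurable hgm]
        exact integral_congr_ae (by filter_upwards [hZae] with ω h; rw [h])
      rw [hZback]
      simp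
    refine ⟨hYk1, ?_⟩
    rw [heq1, heq2]
    calc ∫ w, (∫ ξ, g2 (w, ξ) ∂ν) ∂(P.map Z)
        ≤ ∫ w, ((1 - γ * μ) * ‖w - xstar‖ ^ 2 + 2 * γ ^ 2 * σstar2) ∂(P.map Z) := houter
      _ = _ := heval
  -- induction
  have hind : ∀ k : ℕ, Integrable (fun ω => ‖x (k + 1) ω - xstar‖ ^ 2) P ∧
      ∫ ω, ‖x (k + 1) ω - xstar‖ ^ 2 ∂P ≤ (1 - γ * μ) ^ k * ‖x1 - xstar‖ ^ 2
        + 2 * γ ^ 2 * σstar2 * ∑ j ∈ Finset.range k, (1 - γ * μ) ^ j := by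
    intro k
    induction k with
    | zero =>
      constructor
      · apply Integrable.congr (integrable_const (‖x1 - xstar‖ ^ 2))
        filter_upwards with ω
        rw [hx1 ω]
      · have : ∫ ω, ‖x 1 ω - xstar‖ ^ 2 ∂P = ‖x1 - xstar‖ ^ 2 := by
          rw [MeasureTheory.integral_congr_ae (Filter.Eventually.of_forall fun ω => by rw [hx1 ω])]
          simp
        rw [this]; simp
    | succ k ih =>
      obtain ⟨hint, hle⟩ := ih
      obtain ⟨hint', hle'⟩ := hstep k hint
      refine ⟨hint', ?_⟩
      calc ∫ ω, ‖x (k + 2) ω - xstar‖ ^ 2 ∂P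
          ≤ (1 - γ * μ) * ∫ ω, ‖x (k + 1) ω - xstar‖ ^ 2 ∂P + 2 * γ ^ 2 * σstar2 := hle'
        _ ≤ (1 - γ * μ) * ((1 - γ * μ) ^ k * ‖x1 - xstar‖ ^ 2
              + 2 * γ ^ 2 * σstar2 * ∑ j ∈ Finset.range k, (1 - γ * μ) ^ j)
            + 2 * γ ^ 2 * σstar2 := by
            have := mul_le_mul_of_nonneg_left hle hr0
            linarith
        _ = (1 - γ * μ) ^ (k + 1) * ‖x1 - xstar‖ ^ 2
              + 2 * γ ^ 2 * σstar2 * ∑ j ∈ Finset.range (k + 1), (1 - γ * μ) ^ j := by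
            rw [geom_sum_succ]
            ring
  -- conclude
  obtain ⟨_, hfin⟩ := hind N
  have hpos : 0 < γ * μ := by positivity
  have hsum : ∑ j ∈ Finset.range N, (1 - γ * μ) ^ j ≤ 1 / (γ * μ) := by
    rw [le_div_iff₀ hpos]
    have hgs := geom_sum_mul (1 - γ * μ) N
    have h2 : (∑ j ∈ Finset.range N, (1 - γ * μ) ^ j) * (γ * μ)
        = 1 - (1 - γ * μ) ^ N := by linear_combination -hgs
    have h3 : 0 ≤ (1 - γ * μ) ^ N := pow_nonneg hr0 N
    linarith
  calc ∫ ω, ‖x (N + 1) ω - xstar‖ ^ 2 ∂P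
      ≤ (1 - γ * μ) ^ N * ‖x1 - xstar‖ ^ 2
        + 2 * γ ^ 2 * σstar2 * ∑ j ∈ Finset.range N, (1 - γ * μ) ^ j := hfin
    _ ≤ (1 - γ * μ) ^ N * ‖x1 - xstar‖ ^ 2 + 2 * γ * σstar2 / μ := by
        have h1 : 2 * γ ^ 2 * σstar2 * ∑ j ∈ Finset.range N, (1 - γ * μ) ^ j
            ≤ 2 * γ ^ 2 * σstar2 * (1 / (γ * μ)) := by
          apply mul_le_mul_of_nonneg_left hsum (by positivity)
        have h2 : 2 * γ ^ 2 * σstar2 * (1 / (γ * μ)) = 2 * γ * σstar2 / μ := by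
          field_simp
        linarith
end
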